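/- Let D be a k-exchange system on a finite set E, f : 2^E → ℝ_{≥0} a normalized monotone submodular function, X, Y ∈ D, and let {T_y}_{y ∈ Y\X} be the collection of subsets witnessing the k-exchange property. Then Σ_{y ∈ Y\X} ( f(X ∪ {y} \ T_y) − f(X) ) ≥ f(X ∪ Y) − (k+1)·f(X). -/

import Mathlib

section
variable {E : Type*} [DecidableEq E]

/-- Sum of singleton marginals bounds the joint marginal above. -/
lemma kx_sum_upper (f : Finset E → ℝ)
    (hmono : ∀ A B : Finset E, A ⊆ B → f A ≤ f B)
    (hsub : ∀ A B : Finset E, f (A ∪ B) + f (A ∩ B) ≤ f A + f B)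
    (X : Finset E) (S : Finset E) :
    f (X ∪ S) - f X ≤ ∑ y ∈ S, (f (X ∪ {y}) - f X) := by
  induction S using Finset.induction_on with
  | empty => simp
  | @insert a S ha ih =>
    have h1 := hsub (X ∪ S) (X ∪ {a})
    have e1 : (X ∪ S) ∪ (X ∪ {a}) = X ∪ insert a S := by
      ext x; simp [Finset.mem_union, Finset.mem_insert]; tauto
    have h2 : f X ≤ f ((X ∪ S) ∩ (X ∪ {a})) := by
      apply hmono
      intro x hx
      simp [Finset.mem_inter, Finset.mem_union]
      tauto
    rw [Finset.sum_insert ha]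
    rw [e1] at h1
    linarith

/-- Telescoping: summing marginal removal losses along an order reconstructs the whole loss. -/
lemma kx_telescope [LinearOrder E] (f : Finset E → ℝ) (X : Finset E) (U : Finset E) :
    ∑ x ∈ U, (f (X \ U.filter (· < x)) - f ((X \ U.filter (· < x)) \ {x}))
      = f X - f (X \ U) := by
  induction U using Finset.induction_on_max with
  | empty => simp
  | insert a U' hlt ih =>
    have haU' : a ∉ U' := fun h => lt_irrefl a (hlt a h)
    rw [Finset.sum_insert haU']
    have ea : (insert a U').filter (· < a) = U' := by
      rw [Finset.filter_insert, if_neg (lt_irrefl a)]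
      exact Finset.filter_true_of_mem hlt
    have ex : ∀ x ∈ U', (insert a U').filter (· < x) = U'.filter (· < x) := by
      intro x hx
      rw [Finset.filter_insert, if_neg (not_lt.2 (hlt x hx).le)]
    have esum : ∑ x ∈ U', (f (X \ (insert a U').filter (· < x)) - f ((X \ (insert a U').filter (· < x)) \ {x}))
        = ∑ x ∈ U', (f (X \ U'.filter (· < x)) - f ((X \ U'.filter (· < x)) \ {x})) := by
      apply Finset.sum_congr rfl
      intro x hx; rw [ex x hx]
    have esd : (X \ U') \ {a} = X \ insert a U' := by
      ext x; simp [Finset.mem_sdiff, Finset.mem_insert]; tauto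
    rw [ea, esum, ih, esd]
    ring

/-- Loss of removing `T ⊆ U` is at most the sum of ordered marginal losses over `T`. -/
lemma kx_loss_le [LinearOrder E] (f : Finset E → ℝ)
    (hsub : ∀ A B : Finset E, f (A ∪ B) + f (A ∩ B) ≤ f A + f B)
    (X U : Finset E) (T : Finset E) (hTU : T ⊆ U) :
    f X - f (X \ T) ≤
      ∑ x ∈ T, (f (X \ U.filter (· < x)) - f ((X \ U.filter (· < x)) \ {x})) := by
  induction T using Finset.induction_on_max with
  | empty => simp
  | insert a T' hlt ih =>
    have haT' : a ∉ T' := fun h => lt_irrefl a (hlt a h)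
    have hT'U : T' ⊆ U := fun x hx => hTU (Finset.mem_insert_of_mem hx)
    have hT'P : T' ⊆ U.filter (· < a) := fun x hx =>
      Finset.mem_filter.2 ⟨hT'U hx, hlt x hx⟩
    have haP : a ∉ U.filter (· < a) := fun h => lt_irrefl a (Finset.mem_filter.1 h).2
    set P := U.filter (· < a) with hP
    have e1 : (X \ P) ∪ (X \ insert a T') = X \ T' := by
      ext x
      have hx' := @hT'P x
      simp only [Finset.mem_union, Finset.mem_sdiff, Finset.mem_insert] at *
      constructor
      · rintro (⟨hx, hp⟩ | ⟨hx, h2⟩)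
        · exact ⟨hx, fun ht => hp (hx' ht)⟩
        · exact ⟨hx, fun ht => h2 (Or.inr ht)⟩
      · rintro ⟨hx, ht⟩
        by_cases hxp : x ∈ P
        · right
          refine ⟨hx, fun h => ?_⟩
          rcases h with he | hT
          · exact haP (he ▸ hxp)
          · exact ht hT
        · exact Or.inl ⟨hx, hxp⟩
    have e2 : (X \ P) ∩ (X \ insert a T') = (X \ P) \ {a} := by
      ext x
      have hx' := @hT'P x
      simp only [Finset.mem_inter, Finset.mem_sdiff, Finset.mem_insert,
        Finset.mem_singleton] at *
      constructor
      · rintro ⟨⟨hx, hp⟩, _, h2⟩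
        exact ⟨⟨hx, hp⟩, fun he => h2 (Or.inl he)⟩
      · rintro ⟨⟨hx, hp⟩, hne⟩
        exact ⟨⟨hx, hp⟩, hx, fun h => h.elim hne (fun hT => hp (hx' hT))⟩
    have hkey := hsub (X \ P) (X \ insert a T')
    rw [e1, e2] at hkey
    have ih' := ih hT'U
    rw [Finset.sum_insert haT']
    linarith

end



/-- Local-search gain bound on a `k`-exchange system. `D` is a hereditary set system,
`X, Y ∈ D`, and `{T y}_{y ∈ Y \ X}` witnesses the `k`-exchange property: each `T y` is a
subset of `X \ Y` of size at most `k`, each `x ∈ X \ Y` appears in at most `k` of the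
sets, and `X ∪ S \ ⋃_{y∈S} T y ∈ D` for every `S ⊆ Y \ X`. Then for any normalized
monotone submodular `f ≥ 0`,
`Σ_{y ∈ Y\X} (f(X ∪ {y} \ T y) − f(X)) ≥ f(X ∪ Y) − (k+1)·f(X)`. -/
theorem k_exchange_gain {E : Type*} [Fintype E] [DecidableEq E]
    (k : ℕ) (D : Set (Finset E))
    (hher : ∀ A B : Finset E, A ⊆ B → B ∈ D → A ∈ D)
    (X Y : Finset E) (hX : X ∈ D) (hY : Y ∈ D)
    (T : E → Finset E)
    (hTsub : ∀ y ∈ Y \ X, T y ⊆ X \ Y)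
    (hTcard : ∀ y ∈ Y \ X, (T y).card ≤ k)
    (hTdeg : ∀ x ∈ X \ Y, ((Y \ X).filter fun y => x ∈ T y).card ≤ k)
    (hfeas : ∀ S ⊆ Y \ X, (X ∪ S) \ S.biUnion T ∈ D)
    (f : Finset E → ℝ)
    (hnn : ∀ Z : Finset E, 0 ≤ f Z)
    (hnorm : f ∅ = 0)
    (hmono : ∀ A B : Finset E, A ⊆ B → f A ≤ f B)
    (hsub : ∀ A B : Finset E, f (A ∪ B) + f (A ∩ B) ≤ f A + f B) :
    f (X ∪ Y) - (k + 1 : ℝ) * f X ≤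
      ∑ y ∈ Y \ X, (f ((X ∪ {y}) \ T y) - f X) := by
  classical
  letI : LinearOrder E := LinearOrder.lift' (Fintype.equivFin E) (Fintype.equivFin E).injective
  set S : Finset E := Y \ X with hS
  set U : Finset E := S.biUnion T with hU
  set g : E → ℝ := fun x => f (X \ U.filter (· < x)) - f ((X \ U.filter (· < x)) \ {x}) with hg
  -- basic facts
  have hUsub : U ⊆ X \ Y := by
    intro x hx
    rcases Finset.mem_biUnion.1 hx with ⟨y, hy, hxy⟩
    exact hTsub y hy hxy
  have hgnn : ∀ x : E, 0 ≤ g x := by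
    intro x
    have := hmono ((X \ U.filter (· < x)) \ {x}) (X \ U.filter (· < x)) (Finset.sdiff_subset)
    simp only [hg]; linarith
  -- Step 1: per-element submodular split
  have h1 : ∀ y ∈ S, f (X ∪ {y}) + f (X \ T y) ≤ f ((X ∪ {y}) \ T y) + f X := by
    intro y hy
    have hy' := Finset.mem_sdiff.1 hy
    have hTy : T y ⊆ X \ Y := hTsub y hy
    have hyT : y ∉ T y := fun h => (Finset.mem_sdiff.1 (hTy h)).2 hy'.1
    have e1 : ((X ∪ {y}) \ T y) ∪ X = X ∪ {y} := by
      ext x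
      have hTx := @hTy x
      simp only [Finset.mem_union, Finset.mem_sdiff, Finset.mem_singleton] at *
      constructor
      · rintro (⟨h, _⟩ | h) <;> tauto
      · rintro (h | h)
        · exact Or.inr h
        · subst h; exact Or.inl ⟨Or.inr rfl, hyT⟩
    have e2 : ((X ∪ {y}) \ T y) ∩ X = X \ T y := by
      ext x
      simp only [Finset.mem_inter, Finset.mem_sdiff, Finset.mem_union,
        Finset.mem_singleton] at *
      tauto
    have := hsub ((X ∪ {y}) \ T y) X
    rw [e1, e2] at this
    linarith
  -- Step 2: sum of addition marginals
  have h2 : f (X ∪ Y) - f X ≤ ∑ y ∈ S, (f (X ∪ {y}) - f X) := by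
    have e : X ∪ S = X ∪ Y := by
      ext x; simp only [hS, Finset.mem_union, Finset.mem_sdiff]; tauto
    have := kx_sum_upper f hmono hsub X S
    rw [e] at this; exact this
  -- Step 3: sum of removal losses
  have h3 : ∑ y ∈ S, (f X - f (X \ T y)) ≤ (k : ℝ) * f X := by
    have step1 : ∑ y ∈ S, (f X - f (X \ T y)) ≤ ∑ y ∈ S, ∑ x ∈ T y, g x := by
      apply Finset.sum_le_sum
      intro y hy
      exact kx_loss_le f hsub X U (T y) (Finset.subset_biUnion_of_mem T hy)
    have swap : ∑ y ∈ S, ∑ x ∈ T y, g x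
        = ∑ x ∈ U, ((S.filter fun y => x ∈ T y).card : ℝ) * g x := by
      have e1 : ∀ y ∈ S, ∑ x ∈ T y, g x = ∑ x ∈ U, if x ∈ T y then g x else 0 := by
        intro y hy
        rw [Finset.sum_ite_mem, Finset.inter_eq_right.2 (Finset.subset_biUnion_of_mem T hy)]
      rw [Finset.sum_congr rfl e1, Finset.sum_comm]
      apply Finset.sum_congr rfl
      intro x _
      rw [Finset.sum_ite, Finset.sum_const, Finset.sum_const_zero, add_zero,
        nsmul_eq_mul]
    have step2 : ∑ x ∈ U, ((S.filter fun y => x ∈ T y).card : ℝ) * g x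
        ≤ ∑ x ∈ U, (k : ℝ) * g x := by
      apply Finset.sum_le_sum
      intro x hx
      have hdeg : ((S.filter fun y => x ∈ T y).card : ℝ) ≤ (k : ℝ) := by
        exact_mod_cast hTdeg x (hUsub hx)
      exact mul_le_mul_of_nonneg_right hdeg (hgnn x)
    have tele : ∑ x ∈ U, (k : ℝ) * g x = (k : ℝ) * (f X - f (X \ U)) := by
      rw [← Finset.mul_sum, kx_telescope f X U]
    have last : (k : ℝ) * (f X - f (X \ U)) ≤ (k : ℝ) * f X := by
      apply mul_le_mul_of_nonneg_left _ (Nat.cast_nonneg k)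
      have := hnn (X \ U)
      linarith
    calc ∑ y ∈ S, (f X - f (X \ T y)) ≤ ∑ y ∈ S, ∑ x ∈ T y, g x := step1
      _ = ∑ x ∈ U, ((S.filter fun y => x ∈ T y).card : ℝ) * g x := swap
      _ ≤ ∑ x ∈ U, (k : ℝ) * g x := step2
      _ = (k : ℝ) * (f X - f (X \ U)) := tele
      _ ≤ (k : ℝ) * f X := last
  -- combine
  have h4 : ∑ y ∈ S, ((f (X ∪ {y}) - f X) + (f (X \ T y) - f X))
      ≤ ∑ y ∈ S, (f ((X ∪ {y}) \ T y) - f X) := by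
    apply Finset.sum_le_sum
    intro y hy
    have := h1 y hy
    linarith
  rw [Finset.sum_add_distrib] at h4
  have h5 : ∑ y ∈ S, (f (X \ T y) - f X) = -∑ y ∈ S, (f X - f (X \ T y)) := by
    rw [← Finset.sum_neg_distrib]
    exact Finset.sum_congr rfl (fun y _ => by ring)
  rw [h5] at h4
  linarith
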